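/- Define recursively D^{Γ,+}_{0,1}(j,l) = x_j^{Γ,+} and D^{Γ,+}_{u,1}(j,l) = (1/2)[D^{Γ,+}_{u−1,1}(j,l), Λ^Γ_{j,l,1}] where Λ^Γ_{j,l,1} = −(h^Γ_{j+l} − h^Γ_{j−l}). Then for all u ∈ ℤ≥0 and j,l ∈ ℕ+: D^{Γ,+}_{u,1}(j,l) = Σ_{k=0}^{⌊(u−1)/2⌋} Σ_{i=0}^{u+1} (−1)^{k+i} C(u,k) C(u+1,i) x^{Γ,+}_{(u+1−2i)j+(u−2k)l} + [u even]·Σ_{i=0}^{u/2} (−1)^{u/2+i} C(u,u/2) C(u+1,i) x^{Γ,+}_{(u+1−2i)j}, where x^{Γ,+}_{−m} = −x^{Γ,+}_m and x^{Γ,+}_0 = 0. -/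

import Mathlib

open Finset

noncomputable section

/- Setting: `A` plays the role of the universal enveloping algebra `U(O)` of the
Onsager algebra.  `X m = x_m^{Γ,+}`, `Y m = x_m^{Γ,-}`, `H m = h_m^Γ` (indexed by `ℤ`
via the conventions `x_{-m}^{Γ,±} = -x_m^{Γ,±}`, `x_0^{Γ,±} = 0`, `h_{-m}^Γ = h_m^Γ`),
and the Lie brackets of `O` are imposed as commutator relations. -/
variable {A : Type*} [Ring A] [Algebra ℂ A]

/-- `Λ^Γ_{j,l,1} = -(h^Γ_{j+l} - h^Γ_{j-l})`. -/
def Lam1 (H : ℤ → A) (j l : ℤ) : A := -(H (j + l) - H (j - l))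

/-- `D^{Γ,+}_{u,1}(j,l)`. -/
def Dp (X H : ℤ → A) (j l : ℤ) : ℕ → A
  | 0 => X j
  | u + 1 => ((1 : ℂ) / 2) • ⁅Dp X H j l u, Lam1 H j l⁆

/-- `D^{Γ,-}_{u,1}(j,l)`. -/
def Dm (Y H : ℤ → A) (j l : ℤ) : ℕ → A
  | 0 => Y l
  | u + 1 => (-((1 : ℂ) / 2)) • ⁅Dm Y H j l u, Lam1 H j l⁆

/-- `p^Γ_s(j,l) = [x_j^{Γ,+}, D^{Γ,-}_{s-1,1}(j,l)]`. -/
def pG (X Y H : ℤ → A) (j l : ℤ) (s : ℕ) : A := ⁅X j, Dm Y H j l (s - 1)⁆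

/-- `Λ^Γ_{j,l,n}`, via the recursion `n Λ_n = -∑_{i=1}^n p_i Λ_{n-i}` equivalent to the
exponential generating series definition. -/
def Lam (X Y H : ℤ → A) (j l : ℤ) : ℕ → A
  | 0 => 1
  | n + 1 =>
      (-(((n : ℂ) + 1)⁻¹)) •
        ∑ i ∈ Finset.range (n + 1), pG X Y H j l (i + 1) * Lam X Y H j l (n - i)
  decreasing_by omega

/-- `D^{Γ,+}_{u,v}(j,l)`. -/
def DvP (X H : ℤ → A) (j l : ℤ) : ℕ → ℕ → A
  | u, 0 => if u = 0 then 1 else 0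
  | u, v + 1 =>
      (((v : ℂ) + 1)⁻¹) • ∑ i ∈ Finset.range (u + 1), Dp X H j l i * DvP X H j l (u - i) v

/-- `D^{Γ,-}_{u,v}(j,l)`. -/
def DvM (Y H : ℤ → A) (j l : ℤ) : ℕ → ℕ → A
  | u, 0 => if u = 0 then 1 else 0
  | u, v + 1 =>
      (((v : ℂ) + 1)⁻¹) • ∑ i ∈ Finset.range (u + 1), Dm Y H j l i * DvM Y H j l (u - i) v

lemma lie_sum_left (s : Finset ℕ) (f : ℕ → A) (y : A) :
    ⁅∑ i ∈ s, f i, y⁆ = ∑ i ∈ s, ⁅f i, y⁆ := by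
  simp [Ring.lie_def, Finset.sum_mul, Finset.mul_sum, Finset.sum_sub_distrib]

lemma lie_zsmul_left (c : ℤ) (x y : A) : ⁅c • x, y⁆ = c • ⁅x, y⁆ := by
  rw [Ring.lie_def, Ring.lie_def, smul_sub, smul_mul_assoc, mul_smul_comm]

lemma half_lie (X H : ℤ → A) (hXneg : ∀ m : ℤ, X (-m) = -X m)
    (hHX : ∀ k j : ℤ, ⁅H k, X j⁆ = 2 • (X (j + k) - X (k - j))) (j l m : ℤ) :
    ((1:ℂ)/2) • ⁅X m, Lam1 H j l⁆
    = (X (m+j+l) - X (m-j+l)) - (X (m+j-l) - X (m-j-l)) := by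
  have skew : ∀ x y : A, ⁅x, y⁆ = -⁅y, x⁆ := by
    intro x y; rw [Ring.lie_def, Ring.lie_def]; abel
  have hn : ⁅X m, -(H (j+l) - H (j-l))⁆ = -(⁅X m, H (j+l)⁆ - ⁅X m, H (j-l)⁆) := by
    rw [Ring.lie_def, Ring.lie_def, Ring.lie_def, mul_neg, neg_mul, mul_sub, sub_mul]; abel
  rw [Lam1, hn, skew (X m) (H (j+l)), skew (X m) (H (j-l)), hHX, hHX]
  have e2 : ∀ x : A, ((1:ℂ)/2) • (2 • x) = x := by
    intro x
    rw [← Nat.cast_smul_eq_nsmul ℂ, smul_smul]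
    norm_num
  rw [neg_sub, sub_eq_add_neg, smul_add]
  simp only [smul_neg, neg_neg, e2]
  have a1 : X (m+(j+l)) = X (m+j+l) := by rw [show m+(j+l) = m+j+l by ring]
  have a2 : X (j+l-m) = -X (m-j-l) := by rw [show j+l-m = -(m-j-l) by ring, hXneg]
  have a3 : X (m+(j-l)) = X (m+j-l) := by rw [show m+(j-l) = m+j-l by ring]
  have a4 : X (j-l-m) = -X (m-j+l) := by rw [show j-l-m = -(m-j+l) by ring, hXneg]
  rw [a1, a2, a3, a4]
  abel

theorem pascal {M : Type*} [AddCommGroup M] (F : ℕ → M) (u : ℕ) :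
    ∑ i ∈ Finset.range (u+2), ((-1:ℤ)^i * ((u+1).choose i : ℕ)) • F i
    = ∑ i ∈ Finset.range (u+1), ((-1:ℤ)^i * (u.choose i : ℕ)) • F i
      + ∑ i ∈ Finset.range (u+1), (-((-1:ℤ)^i * (u.choose i : ℕ))) • F (i+1) := by
  rw [Finset.sum_range_succ' (fun i => ((-1:ℤ)^i * ((u+1).choose i : ℕ)) • F i) (u+1)]
  have h1 : ∀ i ∈ Finset.range (u+1),
      ((-1:ℤ)^(i+1) * ((u+1).choose (i+1) : ℕ)) • F (i+1)
      = (-((-1:ℤ)^i * (u.choose i : ℕ))) • F (i+1)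
        + ((-1:ℤ)^(i+1) * (u.choose (i+1) : ℕ)) • F (i+1) := by
    intro i _
    rw [← add_smul, Nat.choose_succ_succ]
    congr 1
    push_cast
    ring
  rw [Finset.sum_congr rfl h1, Finset.sum_add_distrib]
  have h3 : (∑ i ∈ Finset.range (u+1), ((-1:ℤ)^(i+1) * (u.choose (i+1) : ℕ)) • F (i+1))
      + ((-1:ℤ)^0 * ((u+1).choose 0 : ℕ)) • F 0
      = ∑ i ∈ Finset.range (u+1), ((-1:ℤ)^i * (u.choose i : ℕ)) • F i := by
    have h2 : ((-1:ℤ)^0 * ((u+1).choose 0 : ℕ)) • F 0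
        = ((-1:ℤ)^0 * (u.choose 0 : ℕ)) • F 0 := by norm_num
    rw [h2, ← Finset.sum_range_succ' (fun i => ((-1:ℤ)^i * (u.choose i : ℕ)) • F i) (u+1),
      Finset.sum_range_succ]
    simp [Nat.choose_succ_self]
  rw [add_assoc, h3, add_comm]

theorem lemA (X H : ℤ → A) (hXneg : ∀ m : ℤ, X (-m) = -X m)
    (hHX : ∀ k j : ℤ, ⁅H k, X j⁆ = 2 • (X (j + k) - X (k - j))) (j l : ℤ) (u : ℕ) :
    Dp X H j l u = ∑ i ∈ Finset.range (u+1), ∑ k ∈ Finset.range (u+1),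
      (((-1:ℤ)^i * (u.choose i : ℕ)) * ((-1:ℤ)^k * (u.choose k : ℕ))) •
        X (((u:ℤ)+1-2*i)*j + ((u:ℤ)-2*k)*l) := by
  induction u with
  | zero => simp [Dp]
  | succ u ih =>
    have hsmulX : ∀ (c c' a a' : ℤ), c = c' → a = a' → c • X a = c' • X a' := by
      rintro c c' a a' rfl rfl; rfl
    set P : ℕ → ℕ → A := fun i k => X (((u:ℤ)+2-2*i)*j + ((u:ℤ)+1-2*k)*l) with hP
    have hDp : Dp X H j l (u+1) = ((1:ℂ)/2) • ⁅Dp X H j l u, Lam1 H j l⁆ := rfl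
    rw [hDp, ih, lie_sum_left, Finset.smul_sum]
    have key : ∀ i ∈ Finset.range (u+1),
        ((1:ℂ)/2) • ⁅∑ k ∈ Finset.range (u+1),
            (((-1:ℤ)^i * (u.choose i : ℕ)) * ((-1:ℤ)^k * (u.choose k : ℕ))) •
              X (((u:ℤ)+1-2*i)*j + ((u:ℤ)-2*k)*l), Lam1 H j l⁆
        = ((-1:ℤ)^i * (u.choose i : ℕ)) • (∑ k ∈ Finset.range (u+2),
            ((-1:ℤ)^k * ((u+1).choose k : ℕ)) • (P i k - P (i+1) k)) := by
      intro i hi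
      rw [lie_sum_left, Finset.smul_sum]
      have e : ∀ k ∈ Finset.range (u+1),
          ((1:ℂ)/2) • ⁅(((-1:ℤ)^i * (u.choose i : ℕ)) * ((-1:ℤ)^k * (u.choose k : ℕ))) •
              X (((u:ℤ)+1-2*i)*j + ((u:ℤ)-2*k)*l), Lam1 H j l⁆
          = ((-1:ℤ)^i * (u.choose i : ℕ)) •
              (((-1:ℤ)^k * (u.choose k : ℕ)) • (P i k - P (i+1) k)
               + (-((-1:ℤ)^k * (u.choose k : ℕ))) • (P i (k+1) - P (i+1) (k+1))) := by
        intro k _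
        rw [lie_zsmul_left, smul_comm, half_lie X H hXneg hHX j l, mul_smul]
        congr 1
        rw [neg_smul, ← sub_eq_add_neg, ← smul_sub]
        congr 1
        simp only [hP]
        have b1 : X (((u:ℤ)+1-2*i)*j + ((u:ℤ)-2*k)*l + j + l)
            = X (((u:ℤ)+2-2*(i:ℕ))*j + ((u:ℤ)+1-2*(k:ℕ))*l) := by
          congr 1; push_cast; ring
        have b2 : X (((u:ℤ)+1-2*i)*j + ((u:ℤ)-2*k)*l - j + l)
            = X (((u:ℤ)+2-2*((i:ℕ)+1:ℕ))*j + ((u:ℤ)+1-2*(k:ℕ))*l) := by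
          congr 1; push_cast; ring
        have b3 : X (((u:ℤ)+1-2*i)*j + ((u:ℤ)-2*k)*l + j - l)
            = X (((u:ℤ)+2-2*(i:ℕ))*j + ((u:ℤ)+1-2*((k:ℕ)+1:ℕ))*l) := by
          congr 1; push_cast; ring
        have b4 : X (((u:ℤ)+1-2*i)*j + ((u:ℤ)-2*k)*l - j - l)
            = X (((u:ℤ)+2-2*((i:ℕ)+1:ℕ))*j + ((u:ℤ)+1-2*((k:ℕ)+1:ℕ))*l) := by
          congr 1; push_cast; ring
        rw [b1, b2, b3, b4]
      rw [Finset.sum_congr rfl e, ← Finset.smul_sum]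
      congr 1
      rw [Finset.sum_add_distrib, ← pascal (fun k => P i k - P (i+1) k) u]
    rw [Finset.sum_congr rfl key]
    have key2 : ∀ k ∈ Finset.range (u+2),
        ∑ i ∈ Finset.range (u+1), ((-1:ℤ)^i * (u.choose i : ℕ)) •
          (((-1:ℤ)^k * ((u+1).choose k : ℕ)) • (P i k - P (i+1) k))
        = ((-1:ℤ)^k * ((u+1).choose k : ℕ)) •
            ∑ i ∈ Finset.range (u+2), ((-1:ℤ)^i * ((u+1).choose i : ℕ)) • P i k := by
      intro k _
      have e2 : ∀ i ∈ Finset.range (u+1),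
          ((-1:ℤ)^i * (u.choose i : ℕ)) •
            (((-1:ℤ)^k * ((u+1).choose k : ℕ)) • (P i k - P (i+1) k))
          = ((-1:ℤ)^k * ((u+1).choose k : ℕ)) •
              (((-1:ℤ)^i * (u.choose i : ℕ)) • P i k
               + (-((-1:ℤ)^i * (u.choose i : ℕ))) • P (i+1) k) := by
        intro i _
        rw [smul_comm]
        congr 1
        rw [neg_smul, ← sub_eq_add_neg, ← smul_sub]
      rw [Finset.sum_congr rfl e2, ← Finset.smul_sum]
      congr 1
      rw [Finset.sum_add_distrib, ← pascal (fun i => P i k) u]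
    calc ∑ i ∈ Finset.range (u+1), ((-1:ℤ)^i * (u.choose i : ℕ)) •
            ∑ k ∈ Finset.range (u+2), ((-1:ℤ)^k * ((u+1).choose k : ℕ)) • (P i k - P (i+1) k)
        = ∑ i ∈ Finset.range (u+1), ∑ k ∈ Finset.range (u+2),
            ((-1:ℤ)^i * (u.choose i : ℕ)) •
              (((-1:ℤ)^k * ((u+1).choose k : ℕ)) • (P i k - P (i+1) k)) := by
          exact Finset.sum_congr rfl fun i _ => Finset.smul_sum
      _ = ∑ k ∈ Finset.range (u+2), ∑ i ∈ Finset.range (u+1),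
            ((-1:ℤ)^i * (u.choose i : ℕ)) •
              (((-1:ℤ)^k * ((u+1).choose k : ℕ)) • (P i k - P (i+1) k)) := Finset.sum_comm
      _ = ∑ k ∈ Finset.range (u+2), ((-1:ℤ)^k * ((u+1).choose k : ℕ)) •
            ∑ i ∈ Finset.range (u+2), ((-1:ℤ)^i * ((u+1).choose i : ℕ)) • P i k :=
          Finset.sum_congr rfl key2
      _ = ∑ k ∈ Finset.range (u+2), ∑ i ∈ Finset.range (u+2),
            ((-1:ℤ)^k * ((u+1).choose k : ℕ)) •
              (((-1:ℤ)^i * ((u+1).choose i : ℕ)) • P i k) := by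
          exact Finset.sum_congr rfl fun k _ => Finset.smul_sum
      _ = ∑ i ∈ Finset.range (u+2), ∑ k ∈ Finset.range (u+2),
            ((-1:ℤ)^k * ((u+1).choose k : ℕ)) •
              (((-1:ℤ)^i * ((u+1).choose i : ℕ)) • P i k) := Finset.sum_comm
      _ = ∑ i ∈ Finset.range (u+2), ∑ k ∈ Finset.range (u+2),
            (((-1:ℤ)^i * ((u+1).choose i : ℕ)) * ((-1:ℤ)^k * ((u+1).choose k : ℕ))) •
              X ((((u+1:ℕ):ℤ)+1-2*i)*j + (((u+1:ℕ):ℤ)-2*k)*l) := by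
          refine Finset.sum_congr rfl fun i _ => Finset.sum_congr rfl fun k _ => ?_
          rw [smul_smul, hP]
          exact hsmulX _ _ _ _ (by ring) (by push_cast; ring)

theorem sum_range_fold {M : Type*} [AddCommMonoid M] (u : ℕ) (f : ℕ → M) :
    ∑ k ∈ Finset.range (u+1), f k
    = ∑ k ∈ Finset.range ((u+1)/2), (f k + f (u - k))
      + (if Even u then f (u/2) else 0) := by
  induction u using Nat.twoStepInduction generalizing f with
  | zero => simp
  | one => simp [Finset.sum_range_succ]
  | more n ih _ =>
    have key : ∑ k ∈ Finset.range (n+3), f k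
        = f 0 + (∑ k ∈ Finset.range (n+1), f (k+1)) + f (n+2) := by
      rw [Finset.sum_range_succ, Finset.sum_range_succ' f (n+1)]
      abel
    rw [key, ih (fun k => f (k+1))]
    have h2 : (n+2+1)/2 = (n+1)/2 + 1 := by omega
    have h3 : Even (n+2) ↔ Even n := by simp [Nat.even_add]
    rw [h2, Finset.sum_range_succ' (fun k => f k + f (n + 2 - k)) ((n+1)/2)]
    have h4 : ∀ k ∈ Finset.range ((n+1)/2),
        f (k+1) + f (n - k + 1) = f (k+1) + f (n+2-(k+1)) := by
      intro k hk
      simp only [Finset.mem_range] at hk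
      congr 2
      omega
    rw [Finset.sum_congr rfl h4]
    by_cases he : Even n
    · simp only [if_pos he, if_pos (h3.mpr he)]
      have : (n+2)/2 = n/2 + 1 := by omega
      rw [this]
      abel
    · simp only [if_neg he, if_neg (fun h => he (h3.mp h))]
      abel

theorem fold_i {M : Type*} [AddCommGroup M] (X : ℤ → M) (hXneg : ∀ m, X (-m) = -X m)
    (u : ℕ) (j t : ℤ) :
    ∑ i ∈ Finset.range (u+2), ((-1:ℤ)^i * ((u+1).choose i : ℕ)) • X (((u:ℤ)+1-2*i)*j + t)
    = (∑ i ∈ Finset.range (u+1), ((-1:ℤ)^i * (u.choose i : ℕ)) • X (((u:ℤ)+1-2*i)*j + t))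
      + ((-1:ℤ)^u) • ∑ i ∈ Finset.range (u+1),
          ((-1:ℤ)^i * (u.choose i : ℕ)) • X (((u:ℤ)+1-2*i)*j + -t) := by
  rw [pascal (fun i => X (((u:ℤ)+1-2*i)*j + t)) u]
  congr 1
  rw [Finset.smul_sum, ← Finset.sum_range_reflect
    (fun i => ((-1:ℤ)^u) • (((-1:ℤ)^i * (u.choose i : ℕ)) • X (((u:ℤ)+1-2*i)*j + -t))) (u+1)]
  apply Finset.sum_congr rfl
  intro i hi
  simp only [Finset.mem_range] at hi
  have hi' : i ≤ u := by omega
  simp only [Nat.add_sub_cancel]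
  rw [Nat.choose_symm hi']
  have harg : ((u:ℤ)+1-2*((u-i : ℕ):ℤ))*j + -t = -((((u:ℤ)+1-2*((i:ℕ)+1))*j + t)) := by
    push_cast [hi']
    ring
  rw [harg, hXneg, smul_smul, smul_neg, ← neg_smul]
  have hp : (-1:ℤ)^u * (-1)^(u-i) = (-1)^i := by
    rw [← pow_add, neg_one_pow_eq_pow_mod_two, neg_one_pow_eq_pow_mod_two (n := i)]
    congr 1; omega
  congr 2
  push_cast
  rw [← mul_assoc, hp]

theorem middle {M : Type*} [AddCommGroup M] [Module ℂ M]
    (X : ℤ → M) (hXneg : ∀ m, X (-m) = -X m) (u : ℕ) (hu : Even u) (j : ℤ) :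
    ∑ i ∈ Finset.range (u+1), ((-1:ℤ)^i * (u.choose i : ℕ)) • X (((u:ℤ)+1-2*i)*j)
    = ∑ i ∈ Finset.range (u/2+1), ((-1:ℤ)^i * ((u+1).choose i : ℕ)) • X (((u:ℤ)+1-2*i)*j) := by
  have h1 := fold_i X hXneg u j 0
  simp only [add_zero, neg_zero, hu.neg_one_pow, one_smul] at h1
  have h2 := sum_range_fold (u+1) (fun k => ((-1:ℤ)^k * ((u+1).choose k : ℕ)) • X (((u:ℤ)+1-2*k)*j))
  have hodd : ¬ Even (u+1) := by simp [Nat.even_add_one, hu]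
  rw [if_neg hodd, add_zero, show (u+1+1)/2 = u/2 + 1 by omega] at h2
  have hpair : ∀ k ∈ Finset.range (u/2+1),
      ((-1:ℤ)^k * ((u+1).choose k : ℕ)) • X (((u:ℤ)+1-2*k)*j)
        + ((-1:ℤ)^(u+1-k) * ((u+1).choose (u+1-k) : ℕ)) • X (((u:ℤ)+1-2*((u+1-k:ℕ):ℤ))*j)
      = ((-1:ℤ)^k * ((u+1).choose k : ℕ)) • X (((u:ℤ)+1-2*k)*j)
        + ((-1:ℤ)^k * ((u+1).choose k : ℕ)) • X (((u:ℤ)+1-2*k)*j) := by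
    intro k hk
    simp only [Finset.mem_range] at hk
    have hk' : k ≤ u + 1 := by omega
    congr 1
    rw [Nat.choose_symm hk']
    have harg : ((u:ℤ)+1-2*((u+1-k:ℕ):ℤ))*j = -((((u:ℤ)+1-2*(k:ℕ))*j)) := by
      push_cast [hk']
      ring
    rw [harg, hXneg, smul_neg, ← neg_smul]
    congr 1
    have hneg : -((-1:ℤ)^(u+1-k)) = (-1)^k := by
      have h2 : u % 2 = 0 := Nat.even_iff.mp hu
      rw [neg_one_pow_eq_pow_mod_two, neg_one_pow_eq_pow_mod_two (n := k)]
      rcases Nat.mod_two_eq_zero_or_one k with hk2 | hk2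
      · have hm : (u+1-k) % 2 = 1 := by omega
        rw [hk2, hm]; norm_num
      · have hm : (u+1-k) % 2 = 0 := by omega
        rw [hk2, hm]; norm_num
    rw [← hneg]
    ring
  rw [Finset.sum_congr rfl hpair] at h2
  have h3 : (∑ i ∈ Finset.range (u+1), ((-1:ℤ)^i * (u.choose i : ℕ)) • X (((u:ℤ)+1-2*i)*j))
      + (∑ i ∈ Finset.range (u+1), ((-1:ℤ)^i * (u.choose i : ℕ)) • X (((u:ℤ)+1-2*i)*j))
      = (∑ i ∈ Finset.range (u/2+1), ((-1:ℤ)^i * ((u+1).choose i : ℕ)) • X (((u:ℤ)+1-2*i)*j))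
        + (∑ i ∈ Finset.range (u/2+1), ((-1:ℤ)^i * ((u+1).choose i : ℕ)) • X (((u:ℤ)+1-2*i)*j)) := by
    rw [show u+1+1 = u+2 from rfl] at h2
    rw [← h1, h2, Finset.sum_add_distrib]
  have h4 : (2:ℂ) • (∑ i ∈ Finset.range (u+1), ((-1:ℤ)^i * (u.choose i : ℕ)) • X (((u:ℤ)+1-2*i)*j))
      = (2:ℂ) • (∑ i ∈ Finset.range (u/2+1), ((-1:ℤ)^i * ((u+1).choose i : ℕ)) • X (((u:ℤ)+1-2*i)*j)) := by
    rw [two_smul, two_smul]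
    exact h3
  calc ∑ i ∈ Finset.range (u+1), ((-1:ℤ)^i * (u.choose i : ℕ)) • X (((u:ℤ)+1-2*i)*j)
      = (2:ℂ)⁻¹ • ((2:ℂ) • ∑ i ∈ Finset.range (u+1),
          ((-1:ℤ)^i * (u.choose i : ℕ)) • X (((u:ℤ)+1-2*i)*j)) :=
        (inv_smul_smul₀ two_ne_zero _).symm
    _ = (2:ℂ)⁻¹ • ((2:ℂ) • ∑ i ∈ Finset.range (u/2+1),
          ((-1:ℤ)^i * ((u+1).choose i : ℕ)) • X (((u:ℤ)+1-2*i)*j)) := by rw [h4]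
    _ = _ := inv_smul_smul₀ two_ne_zero _

lemma smul_congr_X {M : Type*} [AddCommGroup M] (X : ℤ → M) (c c' a a' : ℤ)
    (h1 : c = c') (h2 : a = a') : c • X a = c' • X a' := by rw [h1, h2]

/-- Explicit formula for `D^{Γ,+}_{u,1}(j,l)` as a `ℤ`-linear combination of the
`x_n^{Γ,+}` (Proposition 2.3, eq. (3) of the paper). -/
theorem Dp_u1_formula (X Y H : ℤ → A)
    (hXneg : ∀ m : ℤ, X (-m) = -X m) (hX0 : X 0 = 0)
    (hYneg : ∀ m : ℤ, Y (-m) = -Y m) (hY0 : Y 0 = 0)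
    (hHneg : ∀ m : ℤ, H (-m) = H m)
    (hXY : ∀ j l : ℤ, ⁅X j, Y l⁆ = H (j + l) - H (j - l))
    (hHX : ∀ k j : ℤ, ⁅H k, X j⁆ = 2 • (X (j + k) - X (k - j)))
    (hHY : ∀ k l : ℤ, ⁅H k, Y l⁆ = -(2 • (Y (l + k) + Y (l - k))))
    (hHH : ∀ k m : ℤ, ⁅H k, H m⁆ = 0)
    (u : ℕ) (j l : ℕ+) :
    Dp X H ((j : ℕ) : ℤ) ((l : ℕ) : ℤ) u =
      (∑ k ∈ Finset.range ((u + 1) / 2), ∑ i ∈ Finset.range (u + 2),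
        ((-1 : ℤ) ^ (k + i) * (u.choose k : ℤ) * ((u + 1).choose i : ℤ)) •
          X (((u : ℤ) + 1 - 2 * i) * ((j : ℕ) : ℤ) + ((u : ℤ) - 2 * k) * ((l : ℕ) : ℤ)))
      + (if Even u then
          ∑ i ∈ Finset.range (u / 2 + 1),
            ((-1 : ℤ) ^ (u / 2 + i) * (u.choose (u / 2) : ℤ) * ((u + 1).choose i : ℤ)) •
              X (((u : ℤ) + 1 - 2 * i) * ((j : ℕ) : ℤ))
        else 0) := by
  set J : ℤ := ((j : ℕ) : ℤ) with hJ
  set L : ℤ := ((l : ℕ) : ℤ) with hL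
  rw [lemA X H hXneg hHX J L u, Finset.sum_comm,
    sum_range_fold u (fun k => ∑ i ∈ Finset.range (u+1),
      (((-1:ℤ)^i * (u.choose i : ℕ)) * ((-1:ℤ)^k * (u.choose k : ℕ))) •
        X (((u:ℤ)+1-2*i)*J + ((u:ℤ)-2*k)*L))]
  congr 1
  · refine Finset.sum_congr rfl fun k hk => ?_
    simp only [Finset.mem_range] at hk
    have hk' : k ≤ u := by omega
    have fk : ∑ i ∈ Finset.range (u+1),
        (((-1:ℤ)^i * (u.choose i : ℕ)) * ((-1:ℤ)^k * (u.choose k : ℕ))) •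
          X (((u:ℤ)+1-2*i)*J + ((u:ℤ)-2*k)*L)
        = ((-1:ℤ)^k * (u.choose k : ℕ)) • ∑ i ∈ Finset.range (u+1),
            ((-1:ℤ)^i * (u.choose i : ℕ)) • X (((u:ℤ)+1-2*i)*J + ((u:ℤ)-2*k)*L) := by
      rw [Finset.smul_sum]
      refine Finset.sum_congr rfl fun i _ => ?_
      rw [smul_smul, mul_comm]
    have hp : (-1:ℤ)^(u-k) = (-1)^u * (-1)^k := by
      rw [← pow_add, neg_one_pow_eq_pow_mod_two, neg_one_pow_eq_pow_mod_two (n := u + k)]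
      congr 1; omega
    have fuk : ∑ i ∈ Finset.range (u+1),
        (((-1:ℤ)^i * (u.choose i : ℕ)) * ((-1:ℤ)^(u-k) * (u.choose (u-k) : ℕ))) •
          X (((u:ℤ)+1-2*i)*J + ((u:ℤ)-2*((u-k:ℕ):ℤ))*L)
        = ((-1:ℤ)^k * (u.choose k : ℕ)) • (((-1:ℤ)^u) • ∑ i ∈ Finset.range (u+1),
            ((-1:ℤ)^i * (u.choose i : ℕ)) • X (((u:ℤ)+1-2*i)*J + -(((u:ℤ)-2*k)*L))) := by
      rw [Finset.smul_sum, Finset.smul_sum]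
      refine Finset.sum_congr rfl fun i _ => ?_
      rw [smul_smul, smul_smul]
      refine smul_congr_X X _ _ _ _ ?_ ?_
      · rw [Nat.choose_symm hk', hp]
        push_cast
        ring
      · push_cast [hk']
        ring
    rw [fk, fuk, ← smul_add, ← fold_i X hXneg u J (((u:ℤ)-2*k)*L), Finset.smul_sum]
    refine Finset.sum_congr rfl fun i _ => ?_
    rw [smul_smul]
    refine smul_congr_X X _ _ _ _ ?_ rfl
    rw [pow_add]
    push_cast
    ring
  · by_cases hu : Even u
    · rw [if_pos hu, if_pos hu]
      have h0 : ((u:ℤ) - 2*((u/2 : ℕ):ℤ)) = 0 := by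
        have := Nat.even_iff.mp hu
        omega
      have step : ∑ i ∈ Finset.range (u+1),
          (((-1:ℤ)^i * (u.choose i : ℕ)) * ((-1:ℤ)^(u/2) * (u.choose (u/2) : ℕ))) •
            X (((u:ℤ)+1-2*i)*J + ((u:ℤ)-2*((u/2:ℕ):ℤ))*L)
          = ((-1:ℤ)^(u/2) * (u.choose (u/2) : ℕ)) • ∑ i ∈ Finset.range (u+1),
              ((-1:ℤ)^i * (u.choose i : ℕ)) • X (((u:ℤ)+1-2*i)*J) := by
        rw [Finset.smul_sum]
        refine Finset.sum_congr rfl fun i _ => ?_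
        rw [smul_smul]
        refine smul_congr_X X _ _ _ _ (by ring) ?_
        rw [h0, zero_mul, add_zero]
      rw [step, middle X hXneg u hu J, Finset.smul_sum]
      refine Finset.sum_congr rfl fun i _ => ?_
      rw [smul_smul]
      refine smul_congr_X X _ _ _ _ ?_ rfl
      rw [pow_add]
      push_cast
      ring
    · rw [if_neg hu, if_neg hu]
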